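/- Fix $T > 0$, $\gamma_2 \in [1/2, 1)$, and suppose the learning rate satisfies $\alpha_C^{N_2} \le N_2^{-(2-2\gamma_2)}$. Let $(C^i_k)_{1 \le i \le N_2, k \ge 0}$ be real sequences satisfying $|C^i_{k+1}| \le |C^i_k| + K\left(\frac{\alpha_C^{N_2}}{N_2^{\gamma_2}} + \frac{\alpha_C^{N_2}}{N_2^{2\gamma_2}} \sum_{m=1}^{N_2} |C^m_k|\right)$ for a constant $K$, with initial values $|C^i_0| \le K_0$ for all $i$. Then there is a constant $C < \infty$, independent of $N_2$, such that $|C^i_k| \le C$ for all $N_2 \ge 1$, all $1 \le i \le N_2$, and all $0 \le k \le \lfloor T N_2 \rfloor$. -/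

import Mathlib

set_option maxHeartbeats 1000000 in
/-- Uniform-in-`N₂` a priori bound on the outer-layer SGD weights (Lemma A.1, first part). -/
theorem outer_weights_uniform_bound
    (T γ2 K K0 : ℝ) (hT : 0 < T) (hγ2l : 1/2 ≤ γ2) (hγ2r : γ2 < 1)
    (hK : 0 ≤ K) (hK0 : 0 ≤ K0) :
    ∃ C : ℝ, ∀ N2 : ℕ, 1 ≤ N2 → ∀ (α : ℝ) (Cp : ℕ → ℕ → ℝ),
      0 ≤ α → α ≤ (N2 : ℝ) ^ (-(2 - 2 * γ2)) →
      (∀ i k, 1 ≤ i → i ≤ N2 →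
        |Cp i (k + 1)| ≤ |Cp i k| +
          K * (α / (N2 : ℝ) ^ γ2 +
            α / (N2 : ℝ) ^ (2 * γ2) * ∑ m ∈ Finset.Icc 1 N2, |Cp m k|)) →
      (∀ i, 1 ≤ i → i ≤ N2 → |Cp i 0| ≤ K0) →
      ∀ i k, 1 ≤ i → i ≤ N2 → k ≤ ⌊T * (N2 : ℝ)⌋₊ → |Cp i k| ≤ C := by
  set E := (K0 + 1) * Real.exp (K * T) with hE
  have hE0 : 0 ≤ E := by positivity
  refine ⟨K0 + T * (K * (1 + E)), ?_⟩
  intro N2 hN2 α Cp hα0 hαle hrec h0 i k hi hik hkT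
  set n : ℝ := (N2 : ℝ) with hn
  have hn1 : (1 : ℝ) ≤ n := by rw [hn]; exact_mod_cast hN2
  have hn0 : (0 : ℝ) < n := lt_of_lt_of_le one_pos hn1
  -- basic rpow estimates
  have h1 : α / n ^ γ2 ≤ 1 / n := by
    have e1 : α / n ^ γ2 ≤ n ^ (-(2 - 2*γ2)) / n ^ γ2 := by
      apply div_le_div_of_nonneg_right hαle (Real.rpow_pos_of_pos hn0 _).le
    have e2 : n ^ (-(2 - 2*γ2)) / n ^ γ2 = n ^ (γ2 - 2) := by
      rw [← Real.rpow_sub hn0]; ring_nf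
    have e3 : n ^ (γ2 - 2) ≤ n ^ (-1 : ℝ) :=
      Real.rpow_le_rpow_of_exponent_le hn1 (by linarith)
    have e4 : n ^ (-1 : ℝ) = 1 / n := by
      rw [Real.rpow_neg_one]; exact (one_div n).symm
    calc α / n ^ γ2 ≤ n ^ (γ2 - 2) := by rw [← e2]; exact e1
      _ ≤ 1 / n := by rw [← e4]; exact e3
  have h2 : α / n ^ (2 * γ2) ≤ 1 / (n * n) := by
    have e1 : α / n ^ (2*γ2) ≤ n ^ (-(2 - 2*γ2)) / n ^ (2*γ2) := by
      apply div_le_div_of_nonneg_right hαle (Real.rpow_pos_of_pos hn0 _).le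
    have e2 : n ^ (-(2 - 2*γ2)) / n ^ (2*γ2) = n ^ (-2 : ℝ) := by
      rw [← Real.rpow_sub hn0]; ring_nf
    have e4 : n ^ (-2 : ℝ) = 1 / (n * n) := by
      rw [show (-2:ℝ) = -(2:ℕ) by norm_num, Real.rpow_neg hn0.le,
        Real.rpow_natCast]
      rw [one_div, pow_two]
    calc α / n ^ (2*γ2) ≤ n ^ (-2:ℝ) := by rw [← e2]; exact e1
      _ = 1 / (n * n) := e4
  have hαn : 0 ≤ α / n ^ γ2 := by positivity
  have hα2n : 0 ≤ α / n ^ (2*γ2) := by positivity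
  -- the total sum
  set S : ℕ → ℝ := fun j => ∑ m ∈ Finset.Icc 1 N2, |Cp m j| with hS
  have hSnn : ∀ j, 0 ≤ S j := fun j =>
    Finset.sum_nonneg (fun m _ => abs_nonneg _)
  have hcard : (Finset.Icc 1 N2).card = N2 := by
    rw [Nat.card_Icc]; omega
  have hS0 : S 0 ≤ K0 * n := by
    have := Finset.sum_le_card_nsmul (Finset.Icc 1 N2) (fun m => |Cp m 0|) K0
      (fun m hm => by
        simp only [Finset.mem_Icc] at hm
        exact h0 m hm.1 hm.2)
    rw [hcard] at this
    simpa [nsmul_eq_mul, mul_comm] using this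
  have hSstep : ∀ j, S (j+1) + n ≤ (1 + K/n) * (S j + n) := by
    intro j
    have hsum : S (j+1) ≤ S j + n * (K * (α / n ^ γ2 + α / n ^ (2*γ2) * S j)) := by
      have : S (j+1) ≤ ∑ m ∈ Finset.Icc 1 N2,
          (|Cp m j| + K * (α / n ^ γ2 + α / n ^ (2*γ2) * S j)) := by
        apply Finset.sum_le_sum
        intro m hm
        simp only [Finset.mem_Icc] at hm
        exact hrec m j hm.1 hm.2
      rw [Finset.sum_add_distrib, Finset.sum_const, hcard] at this
      simpa [nsmul_eq_mul, hn, mul_comm, mul_assoc] using this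
    have hb : K * (α / n ^ γ2 + α / n ^ (2*γ2) * S j) ≤ K * (1/n + S j / (n*n)) := by
      apply mul_le_mul_of_nonneg_left _ hK
      have : α / n ^ (2*γ2) * S j ≤ 1/(n*n) * S j :=
        mul_le_mul_of_nonneg_right h2 (hSnn j)
      have h2' : 1/(n*n) * S j = S j / (n*n) := by ring
      nlinarith [hSnn j]
    have : S (j+1) ≤ S j + n * (K * (1/n + S j/(n*n))) := by
      have := mul_le_mul_of_nonneg_left hb hn0.le
      linarith [hsum]
    have hexp : n * (K * (1/n + S j/(n*n))) = K + K * S j / n := by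
      field_simp
    rw [hexp] at this
    have : S (j+1) + n ≤ S j + n + K + K * S j / n := by linarith
    calc S (j+1) + n ≤ S j + n + K + K * S j / n := this
      _ = (1 + K/n) * (S j + n) := by field_simp; ring
  have hgeom : ∀ j, S j + n ≤ (1 + K/n) ^ j * (S 0 + n) := by
    intro j
    induction j with
    | zero => simp
    | succ j ih =>
      calc S (j+1) + n ≤ (1 + K/n) * (S j + n) := hSstep j
        _ ≤ (1 + K/n) * ((1 + K/n) ^ j * (S 0 + n)) := by
            apply mul_le_mul_of_nonneg_left ih
            positivity
        _ = (1 + K/n) ^ (j+1) * (S 0 + n) := by ring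
  have hkTn : ∀ j : ℕ, j ≤ ⌊T * n⌋₊ → (j : ℝ) ≤ T * n := by
    intro j hj
    exact (Nat.le_floor_iff (by positivity)).mp hj
  have hSbound : ∀ j : ℕ, j ≤ ⌊T * n⌋₊ → S j ≤ E * n := by
    intro j hj
    have hpow : (1 + K/n) ^ j ≤ Real.exp (K * T) := by
      have h1e : 1 + K/n ≤ Real.exp (K/n) := by linarith [Real.add_one_le_exp (K/n)]
      have : (1 + K/n) ^ j ≤ (Real.exp (K/n)) ^ j :=
        pow_le_pow_left₀ (by positivity) h1e j
      rw [← Real.exp_nat_mul] at this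
      refine this.trans (Real.exp_le_exp.mpr ?_)
      have hjn : (j : ℝ) ≤ T * n := hkTn j hj
      rw [show (j:ℝ) * (K/n) = K * (j/n) by ring]
      have : (j:ℝ)/n ≤ T := by
        rw [div_le_iff₀ hn0]; linarith
      nlinarith
    have := hgeom j
    have h1 : (1 + K/n) ^ j * (S 0 + n) ≤ Real.exp (K*T) * ((K0+1) * n) := by
      apply mul_le_mul hpow (by linarith [hS0]) (by positivity) (by positivity)
    calc S j ≤ (1 + K/n) ^ j * (S 0 + n) - n := by linarith
      _ ≤ Real.exp (K*T) * ((K0+1) * n) - n := by linarith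
      _ ≤ E * n := by rw [hE]; nlinarith [Real.exp_pos (K*T)]
  -- per-coordinate bound by induction
  have hmain : ∀ j : ℕ, j ≤ ⌊T * n⌋₊ → |Cp i j| ≤ K0 + j * (K * (1 + E) / n) := by
    intro j
    induction j with
    | zero => intro _; simpa using h0 i hi hik
    | succ j ih =>
      intro hj
      have hj' : j ≤ ⌊T * n⌋₊ := Nat.le_of_succ_le hj
      have hstep := hrec i j hi hik
      have hb : K * (α / n ^ γ2 + α / n ^ (2*γ2) * S j) ≤ K * (1 + E) / n := by
        have hS' : α / n ^ (2*γ2) * S j ≤ 1/(n*n) * (E * n) := by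
          apply mul_le_mul h2 (hSbound j hj') (hSnn j) (by positivity)
        have he : 1/(n*n) * (E * n) = E / n := by field_simp
        rw [he] at hS'
        have : α / n ^ γ2 + α / n ^ (2*γ2) * S j ≤ 1/n + E/n := by linarith
        calc K * (α / n ^ γ2 + α / n ^ (2*γ2) * S j) ≤ K * (1/n + E/n) :=
              mul_le_mul_of_nonneg_left this hK
          _ = K * (1 + E) / n := by field_simp
      calc |Cp i (j+1)| ≤ |Cp i j| + K * (α / n ^ γ2 + α / n ^ (2*γ2) * S j) := hstep
        _ ≤ (K0 + j * (K * (1 + E) / n)) + K * (1 + E) / n := by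
            linarith [ih hj']
        _ = K0 + (j + 1 : ℕ) * (K * (1 + E) / n) := by push_cast; ring
  have := hmain k hkT
  have hknT : (k : ℝ) ≤ T * n := hkTn k hkT
  have hfin : (k : ℝ) * (K * (1 + E) / n) ≤ T * (K * (1 + E)) := by
    have hD : 0 ≤ K * (1 + E) := by positivity
    rw [show (k:ℝ) * (K * (1 + E) / n) = (k/n) * (K * (1 + E)) by ring]
    apply mul_le_mul_of_nonneg_right _ hD
    rw [div_le_iff₀ hn0]; linarith
  linarith
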